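/- arXiv:gr-qc/0406084 — 3 statements merged into one kernel-verified Lean document; each statement's English description precedes it below -/
import Mathlib

section
/- Let U ⊆ ℝ² be an open set containing the origin and let f : ℝ² → ℝ be continuous on U. Suppose that on each of the four open quadrants Q_I, Q_II, Q_III, Q_IV the partial derivative ∂f/∂x exists at every point of Q ∩ U, and that for each quadrant Q there is a continuous function g_Q : ℝ² → ℝ defined (and continuous) on (closure Q) ∩ U which agrees with ∂f/∂x on Q ∩ U. Then the jump of ∂f/∂x across the y-axis is continuous through the origin, i.e. g_I(0,0) − g_II(0,0) = g_IV(0,0) − g_III(0,0) ("jump of the jump vanishes"). -/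
open Set Filter

lemma quadI_slope (U : Set (ℝ × ℝ)) (hU : IsOpen U) (h0 : ((0 : ℝ), (0 : ℝ)) ∈ U)
    (f : ℝ × ℝ → ℝ) (hf : ContinuousOn f U) (g : ℝ × ℝ → ℝ)
    (hg : ContinuousOn g (closure {p : ℝ × ℝ | 0 < p.1 ∧ 0 < p.2} ∩ U))
    (hd : ∀ p ∈ {p : ℝ × ℝ | 0 < p.1 ∧ 0 < p.2} ∩ U,
      HasDerivAt (fun t : ℝ => f (t, p.2)) (g p) p.1)
    {ε : ℝ} (hε : 0 < ε) :
    ∃ δ > 0, ∀ b y : ℝ, 0 < b → b < δ → 0 < y → y < δ →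
      |(f (b, y) - f (0, y)) / b - g (0, 0)| < ε := by
  obtain ⟨r, hr, hball⟩ := Metric.isOpen_iff.1 hU _ h0
  have h0cl : ((0 : ℝ), (0 : ℝ)) ∈ closure {p : ℝ × ℝ | 0 < p.1 ∧ 0 < p.2} := by
    rw [Metric.mem_closure_iff]
    intro η hη
    refine ⟨(η / 2, η / 2), ⟨by positivity, by positivity⟩, ?_⟩
    rw [Prod.dist_eq]
    simp [Real.dist_eq, abs_of_pos (by positivity : (0:ℝ) < η / 2)]
    linarith
  have hcw := (hg _ ⟨h0cl, h0⟩)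
  rw [Metric.continuousWithinAt_iff] at hcw
  obtain ⟨δ₂, hδ₂pos, hδ₂⟩ := hcw ε hε
  refine ⟨min r δ₂, lt_min hr hδ₂pos, ?_⟩
  intro b y hb hbδ hy hyδ
  have hbr : b < r := lt_of_lt_of_le hbδ (min_le_left _ _)
  have hyr : y < r := lt_of_lt_of_le hyδ (min_le_left _ _)
  have hmem : ∀ t : ℝ, 0 ≤ t → t ≤ b → ((t, y) : ℝ × ℝ) ∈ U := by
    intro t ht htb
    apply hball
    rw [Metric.mem_ball, Prod.dist_eq]
    refine max_lt ?_ ?_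
    · rw [Real.dist_eq, sub_zero, abs_of_nonneg ht]; linarith
    · rw [Real.dist_eq, sub_zero, abs_of_pos hy]; exact hyr
  have hcont : ContinuousOn (fun t : ℝ => f (t, y)) (Icc 0 b) :=
    hf.comp ((continuous_id.prodMk continuous_const).continuousOn)
      (fun t ht => hmem t ht.1 ht.2)
  have hderiv : ∀ t ∈ Ioo (0:ℝ) b, HasDerivAt (fun t : ℝ => f (t, y)) (g (t, y)) t :=
    fun t ht => hd (t, y) ⟨⟨ht.1, hy⟩, hmem t ht.1.le ht.2.le⟩
  obtain ⟨ξ, hξ, heq⟩ := exists_hasDerivAt_eq_slope (fun t : ℝ => f (t, y))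
    (fun t => g (t, y)) hb hcont hderiv
  have hslope : (f (b, y) - f (0, y)) / b = g (ξ, y) := by rw [heq, sub_zero]
  rw [hslope]
  have hmemξ : ((ξ, y) : ℝ × ℝ) ∈ closure {p : ℝ × ℝ | 0 < p.1 ∧ 0 < p.2} ∩ U :=
    ⟨subset_closure ⟨hξ.1, hy⟩, hmem ξ hξ.1.le hξ.2.le⟩
  have hdist : dist ((ξ, y) : ℝ × ℝ) ((0 : ℝ), (0 : ℝ)) < δ₂ := by
    rw [Prod.dist_eq]
    refine max_lt ?_ ?_
    · rw [Real.dist_eq, sub_zero, abs_of_pos hξ.1]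
      exact lt_of_lt_of_le (hξ.2.trans hbδ) (min_le_right _ _)
    · rw [Real.dist_eq, sub_zero, abs_of_pos hy]
      exact lt_of_lt_of_le hyδ (min_le_right _ _)
  have := hδ₂ hmemξ hdist
  rwa [Real.dist_eq] at this

/-- "Jump of the jump vanishes" (paper's Lemma 2), y-axis version:
the jump of ∂f/∂x across the y-axis is continuous through the origin. -/
theorem jump_of_jump_vanishes_x
    (U : Set (ℝ × ℝ)) (hU : IsOpen U) (h0 : ((0 : ℝ), (0 : ℝ)) ∈ U)
    (f : ℝ × ℝ → ℝ) (hf : ContinuousOn f U)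
    (gI gII gIII gIV : ℝ × ℝ → ℝ)
    (hgI : ContinuousOn gI (closure {p : ℝ × ℝ | 0 < p.1 ∧ 0 < p.2} ∩ U))
    (hdI : ∀ p ∈ {p : ℝ × ℝ | 0 < p.1 ∧ 0 < p.2} ∩ U,
      HasDerivAt (fun t : ℝ => f (t, p.2)) (gI p) p.1)
    (hgII : ContinuousOn gII (closure {p : ℝ × ℝ | p.1 < 0 ∧ 0 < p.2} ∩ U))
    (hdII : ∀ p ∈ {p : ℝ × ℝ | p.1 < 0 ∧ 0 < p.2} ∩ U,
      HasDerivAt (fun t : ℝ => f (t, p.2)) (gII p) p.1)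
    (hgIII : ContinuousOn gIII (closure {p : ℝ × ℝ | p.1 < 0 ∧ p.2 < 0} ∩ U))
    (hdIII : ∀ p ∈ {p : ℝ × ℝ | p.1 < 0 ∧ p.2 < 0} ∩ U,
      HasDerivAt (fun t : ℝ => f (t, p.2)) (gIII p) p.1)
    (hgIV : ContinuousOn gIV (closure {p : ℝ × ℝ | 0 < p.1 ∧ p.2 < 0} ∩ U))
    (hdIV : ∀ p ∈ {p : ℝ × ℝ | 0 < p.1 ∧ p.2 < 0} ∩ U,
      HasDerivAt (fun t : ℝ => f (t, p.2)) (gIV p) p.1) :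
    gI (0, 0) - gII (0, 0) = gIV (0, 0) - gIII (0, 0) := by
  obtain ⟨r, hr, hball⟩ := Metric.isOpen_iff.1 hU _ h0
  suffices h : ∀ ε > 0, |(gI (0, 0) - gII (0, 0)) - (gIV (0, 0) - gIII (0, 0))| ≤ ε by
    have h0' : |(gI (0, 0) - gII (0, 0)) - (gIV (0, 0) - gIII (0, 0))| ≤ 0 :=
      le_of_forall_pos_le_add (fun ε hε => by simpa using h ε hε)
    have := abs_nonpos_iff.mp h0'
    linarith [sub_eq_zero.mp this]
  intro ε hε
  have hε4 : 0 < ε / 4 := by linarith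
  -- Quadrant I
  obtain ⟨δ1, hδ1pos, H1⟩ := quadI_slope U hU h0 f hf gI hgI hdI hε4
  -- Quadrant II, via reflection x ↦ -x
  have hm2 : Continuous (fun p : ℝ × ℝ => ((-p.1, p.2) : ℝ × ℝ)) :=
    (continuous_fst.neg.prodMk continuous_snd)
  obtain ⟨δ2, hδ2pos, H2'⟩ := quadI_slope
    ((fun p : ℝ × ℝ => ((-p.1, p.2) : ℝ × ℝ)) ⁻¹' U) (hU.preimage hm2)
    (by simpa using h0)
    (fun p => f (-p.1, p.2)) (hf.comp hm2.continuousOn (fun p hp => hp))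
    (fun p => -gII (-p.1, p.2))
    (by
      refine (hgII.comp hm2.continuousOn ?_).neg
      intro p hp
      refine ⟨map_mem_closure (f := fun q : ℝ × ℝ => ((-q.1, q.2) : ℝ × ℝ))
        (s := {p : ℝ × ℝ | 0 < p.1 ∧ 0 < p.2}) (t := {p : ℝ × ℝ | p.1 < 0 ∧ 0 < p.2})
        hm2 hp.1 (fun q hq => ⟨neg_lt_zero.mpr hq.1, hq.2⟩), hp.2⟩)
    (by
      intro p hp
      have h1 := hdII (-p.1, p.2) ⟨⟨neg_lt_zero.mpr hp.1.1, hp.1.2⟩, hp.2⟩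
      have h2 : HasDerivAt (fun t : ℝ => -t) (-1) p.1 := hasDerivAt_neg p.1
      have := h1.comp p.1 h2
      rw [mul_neg_one] at this; exact this)
    hε4
  have H2 : ∀ b y : ℝ, 0 < b → b < δ2 → 0 < y → y < δ2 →
      |(f (-b, y) - f (0, y)) / b + gII (0, 0)| < ε / 4 := by
    intro b y hb hbδ hy hyδ
    have := H2' b y hb hbδ hy hyδ
    simpa [sub_neg_eq_add] using this
  -- Quadrant III, via reflection (x,y) ↦ (-x,-y)
  have hm3 : Continuous (fun p : ℝ × ℝ => ((-p.1, -p.2) : ℝ × ℝ)) :=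
    (continuous_fst.neg.prodMk continuous_snd.neg)
  obtain ⟨δ3, hδ3pos, H3'⟩ := quadI_slope
    ((fun p : ℝ × ℝ => ((-p.1, -p.2) : ℝ × ℝ)) ⁻¹' U) (hU.preimage hm3)
    (by simpa using h0)
    (fun p => f (-p.1, -p.2)) (hf.comp hm3.continuousOn (fun p hp => hp))
    (fun p => -gIII (-p.1, -p.2))
    (by
      refine (hgIII.comp hm3.continuousOn ?_).neg
      intro p hp
      refine ⟨map_mem_closure (f := fun q : ℝ × ℝ => ((-q.1, -q.2) : ℝ × ℝ))
        (s := {p : ℝ × ℝ | 0 < p.1 ∧ 0 < p.2}) (t := {p : ℝ × ℝ | p.1 < 0 ∧ p.2 < 0})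
        hm3 hp.1 (fun q hq => ⟨neg_lt_zero.mpr hq.1, neg_lt_zero.mpr hq.2⟩), hp.2⟩)
    (by
      intro p hp
      have h1 := hdIII (-p.1, -p.2) ⟨⟨neg_lt_zero.mpr hp.1.1, neg_lt_zero.mpr hp.1.2⟩, hp.2⟩
      have h2 : HasDerivAt (fun t : ℝ => -t) (-1) p.1 := hasDerivAt_neg p.1
      have := h1.comp p.1 h2
      rw [mul_neg_one] at this; exact this)
    hε4
  have H3 : ∀ b y : ℝ, 0 < b → b < δ3 → 0 < y → y < δ3 →
      |(f (-b, -y) - f (0, -y)) / b + gIII (0, 0)| < ε / 4 := by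
    intro b y hb hbδ hy hyδ
    have := H3' b y hb hbδ hy hyδ
    simpa [sub_neg_eq_add] using this
  -- Quadrant IV, via reflection y ↦ -y
  have hm4 : Continuous (fun p : ℝ × ℝ => ((p.1, -p.2) : ℝ × ℝ)) :=
    (continuous_fst.prodMk continuous_snd.neg)
  obtain ⟨δ4, hδ4pos, H4'⟩ := quadI_slope
    ((fun p : ℝ × ℝ => ((p.1, -p.2) : ℝ × ℝ)) ⁻¹' U) (hU.preimage hm4)
    (by simpa using h0)
    (fun p => f (p.1, -p.2)) (hf.comp hm4.continuousOn (fun p hp => hp))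
    (fun p => gIV (p.1, -p.2))
    (by
      refine hgIV.comp hm4.continuousOn ?_
      intro p hp
      refine ⟨map_mem_closure (f := fun q : ℝ × ℝ => ((q.1, -q.2) : ℝ × ℝ))
        (s := {p : ℝ × ℝ | 0 < p.1 ∧ 0 < p.2}) (t := {p : ℝ × ℝ | 0 < p.1 ∧ p.2 < 0})
        hm4 hp.1 (fun q hq => ⟨hq.1, neg_lt_zero.mpr hq.2⟩), hp.2⟩)
    (by
      intro p hp
      exact hdIV (p.1, -p.2) ⟨⟨hp.1.1, neg_lt_zero.mpr hp.1.2⟩, hp.2⟩)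
    hε4
  have H4 : ∀ b y : ℝ, 0 < b → b < δ4 → 0 < y → y < δ4 →
      |(f (b, -y) - f (0, -y)) / b - gIV (0, 0)| < ε / 4 := by
    intro b y hb hbδ hy hyδ
    have := H4' b y hb hbδ hy hyδ
    simpa using this
  -- combine
  set δ : ℝ := min (min δ1 δ2) (min (min δ3 δ4) r) with hδdef
  have hδpos : 0 < δ := lt_min (lt_min hδ1pos hδ2pos) (lt_min (lt_min hδ3pos hδ4pos) hr)
  have hδ1 : δ ≤ δ1 := le_trans (min_le_left _ _) (min_le_left _ _)
  have hδ2 : δ ≤ δ2 := le_trans (min_le_left _ _) (min_le_right _ _)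
  have hδ3 : δ ≤ δ3 := le_trans (min_le_right _ _) (le_trans (min_le_left _ _) (min_le_left _ _))
  have hδ4 : δ ≤ δ4 := le_trans (min_le_right _ _) (le_trans (min_le_left _ _) (min_le_right _ _))
  have hδr : δ ≤ r := le_trans (min_le_right _ _) (min_le_right _ _)
  set b : ℝ := δ / 2 with hbdef
  have hb : 0 < b := by positivity
  have hbδ : b < δ := by rw [hbdef]; linarith
  set A : ℝ → ℝ := fun y => (f (b, y) - f (0, y)) / b - (f (0, y) - f (-b, y)) / b with hAdef
  have hcy : ∀ c : ℝ, |c| < r → ContinuousAt (fun y : ℝ => f (c, y)) 0 := by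
    intro c hc
    have hcU : ((c, (0:ℝ)) : ℝ × ℝ) ∈ U := by
      apply hball
      rw [Metric.mem_ball, Prod.dist_eq]
      refine max_lt ?_ ?_
      · rwa [Real.dist_eq, sub_zero]
      · simpa [Real.dist_eq] using hr
    exact (hf.continuousAt (hU.mem_nhds hcU)).comp
      ((continuous_const.prodMk continuous_id).continuousAt)
  have hbr : |b| < r := by rw [abs_of_pos hb]; linarith
  have h0r : |(0:ℝ)| < r := by simpa using hr
  have hnbr : |(-b)| < r := by rwa [abs_neg]
  have contA : ContinuousAt A 0 :=
    ((((hcy b hbr).sub (hcy 0 h0r)).div_const b).sub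
      (((hcy 0 h0r).sub (hcy (-b) hnbr)).div_const b))
  have hpos : ∀ y : ℝ, 0 < y → y < δ → |A y - (gI (0, 0) - gII (0, 0))| ≤ ε / 2 := by
    intro y hy hyδ
    have e1 := H1 b y hb (lt_of_lt_of_le hbδ hδ1) hy (lt_of_lt_of_le hyδ hδ1)
    have e2 := H2 b y hb (lt_of_lt_of_le hbδ hδ2) hy (lt_of_lt_of_le hyδ hδ2)
    have hrw : A y - (gI (0, 0) - gII (0, 0)) =
        ((f (b, y) - f (0, y)) / b - gI (0, 0)) + ((f (-b, y) - f (0, y)) / b + gII (0, 0)) := by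
      simp only [hAdef]
      ring
    rw [hrw]
    calc |_ + _| ≤ _ + _ := abs_add_le _ _
      _ ≤ ε / 2 := by linarith
  have hneg : ∀ y : ℝ, 0 < y → y < δ → |A (-y) - (gIV (0, 0) - gIII (0, 0))| ≤ ε / 2 := by
    intro y hy hyδ
    have e4 := H4 b y hb (lt_of_lt_of_le hbδ hδ4) hy (lt_of_lt_of_le hyδ hδ4)
    have e3 := H3 b y hb (lt_of_lt_of_le hbδ hδ3) hy (lt_of_lt_of_le hyδ hδ3)
    have hrw : A (-y) - (gIV (0, 0) - gIII (0, 0)) =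
        ((f (b, -y) - f (0, -y)) / b - gIV (0, 0)) +
          ((f (-b, -y) - f (0, -y)) / b + gIII (0, 0)) := by
      simp only [hAdef]
      ring
    rw [hrw]
    calc |_ + _| ≤ _ + _ := abs_add_le _ _
      _ ≤ ε / 2 := by linarith
  -- limits through y = 0
  have tA : Tendsto A (nhdsWithin 0 (Ioi 0)) (nhds (A 0)) :=
    contA.tendsto.mono_left nhdsWithin_le_nhds
  have hL : |A 0 - (gI (0, 0) - gII (0, 0))| ≤ ε / 2 := by
    refine le_of_tendsto ((tA.sub_const _).abs) ?_
    filter_upwards [Ioo_mem_nhdsGT_of_mem (Set.mem_Ico.mpr ⟨le_refl (0:ℝ), hδpos⟩)] with y hy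
    exact hpos y hy.1 hy.2
  have tneg : Tendsto (fun y : ℝ => -y) (nhdsWithin 0 (Ioi 0)) (nhds (0 : ℝ)) := by
    have := (continuous_neg.tendsto (0 : ℝ)).mono_left (nhdsWithin_le_nhds (s := Ioi (0:ℝ)))
    simpa using this
  have tA' : Tendsto (fun y : ℝ => A (-y)) (nhdsWithin 0 (Ioi 0)) (nhds (A 0)) :=
    contA.tendsto.comp tneg
  have hM : |A 0 - (gIV (0, 0) - gIII (0, 0))| ≤ ε / 2 := by
    refine le_of_tendsto ((tA'.sub_const _).abs) ?_
    filter_upwards [Ioo_mem_nhdsGT_of_mem (Set.mem_Ico.mpr ⟨le_refl (0:ℝ), hδpos⟩)] with y hy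
    exact hneg y hy.1 hy.2
  calc |(gI (0, 0) - gII (0, 0)) - (gIV (0, 0) - gIII (0, 0))|
      ≤ |(gI (0, 0) - gII (0, 0)) - A 0| + |A 0 - (gIV (0, 0) - gIII (0, 0))| :=
        abs_sub_le _ _ _
    _ ≤ ε := by rw [abs_sub_comm]; linarith
end

section
/- Let U ⊆ ℝ² be an open set containing the origin and let f : ℝ² → ℝ be continuous on U. Suppose that on each of the four open quadrants Q_I, Q_II, Q_III, Q_IV the partial derivative ∂f/∂y exists at every point of Q ∩ U, and that for each quadrant Q there is a continuous function h_Q : ℝ² → ℝ defined (and continuous) on (closure Q) ∩ U which agrees with ∂f/∂y on Q ∩ U. Then the jump of ∂f/∂y across the x-axis is continuous through the origin, i.e. h_I(0,0) − h_IV(0,0) = h_II(0,0) − h_III(0,0). -/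
open Set Filter Topology

/-- Key lemma: if ∂f/∂y exists on the open first quadrant (intersected with U)
and extends continuously to the closed first quadrant, then the right slope of
`y ↦ f (0, y)` at `0` tends to the extension's value at the origin. -/
lemma key_slope_lemma
    (U : Set (ℝ × ℝ)) (hU : IsOpen U) (h0 : ((0 : ℝ), (0 : ℝ)) ∈ U)
    (f : ℝ × ℝ → ℝ) (hf : ContinuousOn f U)
    (h : ℝ × ℝ → ℝ)
    (hh : ContinuousOn h (closure {p : ℝ × ℝ | 0 < p.1 ∧ 0 < p.2} ∩ U))
    (hd : ∀ p ∈ {p : ℝ × ℝ | 0 < p.1 ∧ 0 < p.2} ∩ U,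
      HasDerivAt (fun t : ℝ => f (p.1, t)) (h p) p.2) :
    Tendsto (fun y : ℝ => (f (0, y) - f (0, 0)) / y) (𝓝[>] 0) (𝓝 (h (0, 0))) := by
  have h0cl : ((0 : ℝ), (0 : ℝ)) ∈ closure {p : ℝ × ℝ | 0 < p.1 ∧ 0 < p.2} := by
    have htend : Tendsto (fun n : ℕ => ((1 / ((n : ℝ) + 1) : ℝ), (1 / ((n : ℝ) + 1) : ℝ)))
        atTop (𝓝 ((0 : ℝ), (0 : ℝ))) :=
      tendsto_one_div_add_atTop_nhds_zero_nat.prodMk_nhds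
        tendsto_one_div_add_atTop_nhds_zero_nat
    exact mem_closure_of_tendsto htend
      (Eventually.of_forall fun n => ⟨by positivity, by positivity⟩)
  rw [Metric.tendsto_nhdsWithin_nhds]
  intro ε hε
  -- continuity of h at the origin
  have hcw : ContinuousWithinAt h (closure {p : ℝ × ℝ | 0 < p.1 ∧ 0 < p.2} ∩ U) (0, 0) :=
    hh _ ⟨h0cl, h0⟩
  rw [Metric.continuousWithinAt_iff] at hcw
  obtain ⟨δ₁, hδ₁, hball₁⟩ := hcw (ε / 2) (by positivity)
  obtain ⟨δ₂, hδ₂, hball₂⟩ := Metric.isOpen_iff.1 hU _ h0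
  refine ⟨min δ₁ δ₂, lt_min hδ₁ hδ₂, ?_⟩
  intro y hy hyd
  have hy0 : (0 : ℝ) < y := hy
  rw [Real.dist_eq, sub_zero, abs_of_pos hy0] at hyd
  have hyδ₁ : y < δ₁ := lt_of_lt_of_le hyd (min_le_left _ _)
  have hyδ₂ : y < δ₂ := lt_of_lt_of_le hyd (min_le_right _ _)
  -- membership helper
  have hmemU : ∀ a b : ℝ, |a| < δ₂ → |b| < δ₂ → (a, b) ∈ U := by
    intro a b ha hb
    apply hball₂
    rw [Metric.mem_ball, Prod.dist_eq]
    simp [Real.dist_eq, ha, hb]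
  -- main estimate for x > 0 small
  have bound : ∀ x : ℝ, x ∈ Ioo (0 : ℝ) (min δ₁ δ₂) →
      |f (x, y) - f (x, 0) - h (0, 0) * y| ≤ ε / 2 * y := by
    intro x hx
    have hx0 : 0 < x := hx.1
    have hxδ₁ : x < δ₁ := lt_of_lt_of_le hx.2 (min_le_left _ _)
    have hxδ₂ : x < δ₂ := lt_of_lt_of_le hx.2 (min_le_right _ _)
    have hcont : ContinuousOn (fun t : ℝ => f (x, t)) (Icc 0 y) := by
      apply hf.comp (Continuous.continuousOn (by fun_prop))
      intro t ht
      exact hmemU x t (by rw [abs_of_pos hx0]; exact hxδ₂)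
        (by rw [abs_of_nonneg ht.1]; exact lt_of_le_of_lt ht.2 hyδ₂)
    have hderiv : ∀ t ∈ Ioo (0 : ℝ) y, HasDerivAt (fun t : ℝ => f (x, t)) (h (x, t)) t := by
      intro t ht
      exact hd (x, t) ⟨⟨hx0, ht.1⟩,
        hmemU x t (by rw [abs_of_pos hx0]; exact hxδ₂)
          (by rw [abs_of_pos ht.1]; exact lt_trans ht.2 hyδ₂)⟩
    obtain ⟨c, hc, hceq⟩ := exists_hasDerivAt_eq_slope (fun t : ℝ => f (x, t))
      (fun t : ℝ => h (x, t)) hy0 hcont hderiv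
    have hcU : (x, c) ∈ U := hmemU x c (by rw [abs_of_pos hx0]; exact hxδ₂)
      (by rw [abs_of_pos hc.1]; exact lt_trans hc.2 hyδ₂)
    have hcQ : (x, c) ∈ closure {p : ℝ × ℝ | 0 < p.1 ∧ 0 < p.2} :=
      subset_closure ⟨hx0, hc.1⟩
    have hdist : dist ((x, c) : ℝ × ℝ) ((0 : ℝ), (0 : ℝ)) < δ₁ := by
      rw [Prod.dist_eq]
      simp only [Real.dist_eq, sub_zero]
      rw [abs_of_pos hx0, abs_of_pos hc.1]
      exact max_lt hxδ₁ (lt_trans hc.2 hyδ₁)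
    have hhc : |h (x, c) - h (0, 0)| < ε / 2 := by
      have := hball₁ ⟨hcQ, hcU⟩ hdist
      rwa [Real.dist_eq] at this
    have hval : f (x, y) - f (x, 0) = h (x, c) * y := by
      have : h (x, c) = (f (x, y) - f (x, 0)) / (y - 0) := hceq
      field_simp at this
      rw [hceq, sub_zero, div_mul_cancel₀ _ hy0.ne']
    rw [hval, ← sub_mul, abs_mul, abs_of_pos hy0]
    exact mul_le_mul_of_nonneg_right (le_of_lt hhc) (le_of_lt hy0)
  -- pass to the limit x → 0⁺
  have hyU : ((0 : ℝ), y) ∈ U := hmemU 0 y (by simpa using hδ₂) (by rw [abs_of_pos hy0]; exact hyδ₂)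
  have lim : Tendsto (fun x : ℝ => f (x, y) - f (x, 0) - h (0, 0) * y) (𝓝[>] 0)
      (𝓝 (f (0, y) - f (0, 0) - h (0, 0) * y)) := by
    have g1 : ContinuousAt (fun x : ℝ => ((x, y) : ℝ × ℝ)) 0 := by fun_prop
    have g2 : ContinuousAt (fun x : ℝ => ((x, (0 : ℝ)) : ℝ × ℝ)) 0 := by fun_prop
    have c1 : Tendsto (fun x : ℝ => f (x, y)) (𝓝 0) (𝓝 (f (0, y))) :=
      (hf.continuousAt (hU.mem_nhds hyU)).tendsto.comp g1
    have c2 : Tendsto (fun x : ℝ => f (x, 0)) (𝓝 0) (𝓝 (f (0, 0))) :=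
      (hf.continuousAt (hU.mem_nhds h0)).tendsto.comp g2
    exact ((c1.sub c2).sub tendsto_const_nhds).mono_left nhdsWithin_le_nhds
  have evbound : ∀ᶠ x in 𝓝[>] (0 : ℝ), |f (x, y) - f (x, 0) - h (0, 0) * y| ≤ ε / 2 * y := by
    have hmem : Ioo (0 : ℝ) (min δ₁ δ₂) ∈ 𝓝[>] (0 : ℝ) :=
      Ioo_mem_nhdsGT_of_mem ⟨le_refl _, lt_min hδ₁ hδ₂⟩
    filter_upwards [hmem] with x hx using bound x hx
  have key : |f (0, y) - f (0, 0) - h (0, 0) * y| ≤ ε / 2 * y :=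
    le_of_tendsto lim.abs evbound
  rw [Real.dist_eq]
  have heq : (f (0, y) - f (0, 0)) / y - h (0, 0) = (f (0, y) - f (0, 0) - h (0, 0) * y) / y := by
    field_simp
  rw [heq, abs_div, abs_of_pos hy0]
  calc |f (0, y) - f (0, 0) - h (0, 0) * y| / y ≤ ε / 2 := by
        rw [div_le_iff₀ hy0]; exact key
    _ < ε := half_lt_self hε

/-- "Jump of the jump vanishes", x-axis version:
the jump of ∂f/∂y across the x-axis is continuous through the origin. -/
theorem jump_of_jump_vanishes_y
    (U : Set (ℝ × ℝ)) (hU : IsOpen U) (h0 : ((0 : ℝ), (0 : ℝ)) ∈ U)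
    (f : ℝ × ℝ → ℝ) (hf : ContinuousOn f U)
    (hI hII hIII hIV : ℝ × ℝ → ℝ)
    (hhI : ContinuousOn hI (closure {p : ℝ × ℝ | 0 < p.1 ∧ 0 < p.2} ∩ U))
    (hdI : ∀ p ∈ {p : ℝ × ℝ | 0 < p.1 ∧ 0 < p.2} ∩ U,
      HasDerivAt (fun t : ℝ => f (p.1, t)) (hI p) p.2)
    (hhII : ContinuousOn hII (closure {p : ℝ × ℝ | p.1 < 0 ∧ 0 < p.2} ∩ U))
    (hdII : ∀ p ∈ {p : ℝ × ℝ | p.1 < 0 ∧ 0 < p.2} ∩ U,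
      HasDerivAt (fun t : ℝ => f (p.1, t)) (hII p) p.2)
    (hhIII : ContinuousOn hIII (closure {p : ℝ × ℝ | p.1 < 0 ∧ p.2 < 0} ∩ U))
    (hdIII : ∀ p ∈ {p : ℝ × ℝ | p.1 < 0 ∧ p.2 < 0} ∩ U,
      HasDerivAt (fun t : ℝ => f (p.1, t)) (hIII p) p.2)
    (hhIV : ContinuousOn hIV (closure {p : ℝ × ℝ | 0 < p.1 ∧ p.2 < 0} ∩ U))
    (hdIV : ∀ p ∈ {p : ℝ × ℝ | 0 < p.1 ∧ p.2 < 0} ∩ U,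
      HasDerivAt (fun t : ℝ => f (p.1, t)) (hIV p) p.2) :
    hI (0, 0) - hIV (0, 0) = hII (0, 0) - hIII (0, 0) := by
  -- quadrant I : slope from above tends to hI (0,0)
  have T1 : Tendsto (fun y : ℝ => (f (0, y) - f (0, 0)) / y) (𝓝[>] 0) (𝓝 (hI (0, 0))) :=
    key_slope_lemma U hU h0 f hf hI hhI hdI
  -- quadrant II : reflect x
  have T2 : Tendsto (fun y : ℝ => (f (0, y) - f (0, 0)) / y) (𝓝[>] 0) (𝓝 (hII (0, 0))) := by
    have hLc : Continuous (fun p : ℝ × ℝ => ((-p.1, p.2) : ℝ × ℝ)) := by fun_prop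
    have := key_slope_lemma ((fun p : ℝ × ℝ => ((-p.1, p.2) : ℝ × ℝ)) ⁻¹' U)
      (hU.preimage hLc) (by simpa using h0)
      (fun p : ℝ × ℝ => f (-p.1, p.2))
      (hf.comp hLc.continuousOn (fun p hp => hp))
      (fun p : ℝ × ℝ => hII (-p.1, p.2))
      (by
        apply hhII.comp hLc.continuousOn
        rintro p ⟨hp1, hp2⟩
        refine ⟨?_, hp2⟩
        have hmap : Set.MapsTo (fun p : ℝ × ℝ => ((-p.1, p.2) : ℝ × ℝ))
            {p : ℝ × ℝ | 0 < p.1 ∧ 0 < p.2} {p : ℝ × ℝ | p.1 < 0 ∧ 0 < p.2} :=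
          fun q hq => ⟨neg_lt_zero.mpr hq.1, hq.2⟩
        exact hmap.closure hLc hp1)
      (by
        rintro p ⟨hp1, hp2⟩
        exact hdII (-p.1, p.2) ⟨⟨neg_lt_zero.mpr hp1.1, hp1.2⟩, hp2⟩)
    simpa using this
  -- quadrant III : reflect both
  have T3 : Tendsto (fun y : ℝ => (f (0, -y) - f (0, 0)) / y) (𝓝[>] 0) (𝓝 (-hIII (0, 0))) := by
    have hLc : Continuous (fun p : ℝ × ℝ => ((-p.1, -p.2) : ℝ × ℝ)) := by fun_prop
    have := key_slope_lemma ((fun p : ℝ × ℝ => ((-p.1, -p.2) : ℝ × ℝ)) ⁻¹' U)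
      (hU.preimage hLc) (by simpa using h0)
      (fun p : ℝ × ℝ => f (-p.1, -p.2))
      (hf.comp hLc.continuousOn (fun p hp => hp))
      (fun p : ℝ × ℝ => -hIII (-p.1, -p.2))
      (by
        apply ContinuousOn.neg
        apply hhIII.comp hLc.continuousOn
        rintro p ⟨hp1, hp2⟩
        refine ⟨?_, hp2⟩
        have hmap : Set.MapsTo (fun p : ℝ × ℝ => ((-p.1, -p.2) : ℝ × ℝ))
            {p : ℝ × ℝ | 0 < p.1 ∧ 0 < p.2} {p : ℝ × ℝ | p.1 < 0 ∧ p.2 < 0} :=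
          fun q hq => ⟨neg_lt_zero.mpr hq.1, neg_lt_zero.mpr hq.2⟩
        exact hmap.closure hLc hp1)
      (by
        rintro p ⟨hp1, hp2⟩
        have base := hdIII (-p.1, -p.2) ⟨⟨neg_lt_zero.mpr hp1.1, neg_lt_zero.mpr hp1.2⟩, hp2⟩
        have := base.comp p.2 ((hasDerivAt_id p.2).neg)
        exact this.congr_deriv (by ring))
    simpa using this
  -- quadrant IV : reflect y
  have T4 : Tendsto (fun y : ℝ => (f (0, -y) - f (0, 0)) / y) (𝓝[>] 0) (𝓝 (-hIV (0, 0))) := by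
    have hLc : Continuous (fun p : ℝ × ℝ => ((p.1, -p.2) : ℝ × ℝ)) := by fun_prop
    have := key_slope_lemma ((fun p : ℝ × ℝ => ((p.1, -p.2) : ℝ × ℝ)) ⁻¹' U)
      (hU.preimage hLc) (by simpa using h0)
      (fun p : ℝ × ℝ => f (p.1, -p.2))
      (hf.comp hLc.continuousOn (fun p hp => hp))
      (fun p : ℝ × ℝ => -hIV (p.1, -p.2))
      (by
        apply ContinuousOn.neg
        apply hhIV.comp hLc.continuousOn
        rintro p ⟨hp1, hp2⟩
        refine ⟨?_, hp2⟩
        have hmap : Set.MapsTo (fun p : ℝ × ℝ => ((p.1, -p.2) : ℝ × ℝ))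
            {p : ℝ × ℝ | 0 < p.1 ∧ 0 < p.2} {p : ℝ × ℝ | 0 < p.1 ∧ p.2 < 0} :=
          fun q hq => ⟨hq.1, neg_lt_zero.mpr hq.2⟩
        exact hmap.closure hLc hp1)
      (by
        rintro p ⟨hp1, hp2⟩
        have base := hdIV (p.1, -p.2) ⟨⟨hp1.1, neg_lt_zero.mpr hp1.2⟩, hp2⟩
        have := base.comp p.2 ((hasDerivAt_id p.2).neg)
        exact this.congr_deriv (by ring))
    simpa using this
  have e1 : hI (0, 0) = hII (0, 0) := tendsto_nhds_unique T1 T2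
  have e2 : -hIII (0, 0) = -hIV (0, 0) := tendsto_nhds_unique T3 T4
  have e3 : hIII (0, 0) = hIV (0, 0) := by linarith
  linarith
end

section
/- Let κ : ℝ → ℝ satisfy: for every y > −1, κ(y) > 0 and (κ(y) − 1)·exp(κ(y)) = y. Let m > 0 and let u, v be reals with u·v < 1, and set r := 2m·κ(−u·v) (so r > 0). Then the function t ↦ log( (2m·κ(−t·v))² ), defined for t with t·v < 1, is differentiable at t = u with derivative d = −(8m²v/r²)·exp(−r/(2m)), and this derivative satisfies (u/(4m))·d = (r − 2m)/r². -/
private noncomputable def kruskalF (x : ℝ) : ℝ := (x - 1) * Real.exp x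

private lemma kruskal_f_deriv (x : ℝ) :
    HasDerivAt kruskalF (x * Real.exp x) x := by
  have h := ((hasDerivAt_id x).sub_const 1).mul (Real.hasDerivAt_exp x)
  have he : x * Real.exp x = 1 * Real.exp x + (x - 1) * Real.exp x := by ring
  unfold kruskalF
  rw [he]
  exact h

private lemma kruskal_f_mono :
    StrictMonoOn kruskalF (Set.Ici 0) := by
  apply strictMonoOn_of_deriv_pos (convex_Ici 0)
  · have hc : Continuous kruskalF := by
      unfold kruskalF
      exact (continuous_id.sub continuous_const).mul Real.continuous_exp
    exact hc.continuousOn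
  · intro x hx
    rw [interior_Ici] at hx
    rw [(kruskal_f_deriv x).deriv]
    exact mul_pos hx (Real.exp_pos x)

private lemma kruskal_cont (κ : ℝ → ℝ)
    (hκ : ∀ y : ℝ, -1 < y → 0 < κ y ∧ (κ y - 1) * Real.exp (κ y) = y)
    (y0 : ℝ) (hy0 : -1 < y0) : ContinuousAt κ y0 := by
  obtain ⟨hx0pos, hx0eq⟩ := hκ y0 hy0
  set x0 := κ y0 with hx0def
  have hfx0 : kruskalF x0 = y0 := hx0eq
  rw [Metric.continuousAt_iff]
  intro ε hε
  set ε' := min (ε / 2) (x0 / 2) with hε'def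
  have hε'pos : 0 < ε' := lt_min (by linarith) (by linarith)
  have hε'lt : ε' < ε := lt_of_le_of_lt (min_le_left _ _) (by linarith)
  have hε'le : ε' ≤ x0 / 2 := min_le_right _ _
  have hx0ε : 0 < x0 - ε' := by linarith
  have hlt1 : kruskalF (x0 - ε') < y0 := by
    have := kruskal_f_mono (Set.mem_Ici.mpr hx0ε.le) (Set.mem_Ici.mpr hx0pos.le)
      (by linarith : x0 - ε' < x0)
    rwa [hfx0] at this
  have hlt2 : y0 < kruskalF (x0 + ε') := by
    have := kruskal_f_mono (Set.mem_Ici.mpr hx0pos.le)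
      (Set.mem_Ici.mpr (by linarith : (0:ℝ) ≤ x0 + ε')) (by linarith : x0 < x0 + ε')
    rwa [hfx0] at this
  refine ⟨min (y0 - kruskalF (x0 - ε')) (kruskalF (x0 + ε') - y0),
    lt_min (by linarith) (by linarith), ?_⟩
  intro y hy
  rw [Real.dist_eq, abs_lt] at hy
  obtain ⟨hy1, hy2⟩ := hy
  have hylt1 : kruskalF (x0 - ε') < y := by
    have := min_le_left (y0 - kruskalF (x0 - ε')) (kruskalF (x0 + ε') - y0); linarith
  have hylt2 : y < kruskalF (x0 + ε') := by
    have := min_le_right (y0 - kruskalF (x0 - ε')) (kruskalF (x0 + ε') - y0); linarith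
  have hfneg1 : (-1 : ℝ) < kruskalF (x0 - ε') := by
    have h0 : kruskalF 0 = -1 := by simp [kruskalF]
    have := kruskal_f_mono (Set.mem_Ici.mpr le_rfl) (Set.mem_Ici.mpr hx0ε.le) hx0ε
    rw [h0] at this; exact this
  have hy' : -1 < y := lt_trans hfneg1 hylt1
  obtain ⟨hκypos, hκyeq⟩ := hκ y hy'
  have hfκy : kruskalF (κ y) = y := hκyeq
  have h1 : x0 - ε' < κ y := by
    by_contra h
    push_neg at h
    rcases eq_or_lt_of_le h with h | h
    · rw [← h, hfκy] at hylt1; exact lt_irrefl _ hylt1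
    · have := kruskal_f_mono (Set.mem_Ici.mpr hκypos.le) (Set.mem_Ici.mpr hx0ε.le) h
      rw [hfκy] at this; linarith
  have h2 : κ y < x0 + ε' := by
    by_contra h
    push_neg at h
    rcases eq_or_lt_of_le h with h | h
    · rw [h, hfκy] at hylt2; exact lt_irrefl _ hylt2
    · have := kruskal_f_mono (Set.mem_Ici.mpr (by linarith : (0:ℝ) ≤ x0 + ε'))
        (Set.mem_Ici.mpr hκypos.le) h
      rw [hfκy] at this; linarith
  rw [Real.dist_eq, abs_lt]
  constructor <;> [linarith; linarith]

/-- In Kruskal–Szekeres coordinates with area radius r = 2m·κ(−uv), the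
transversal derivative of ln λ along ∂_u satisfies
(u/(4m))·∂_u log(r²) = (r − 2m)/r² (the paper's computation Y(ln λ) = (r−2m)/r²). -/
theorem kruskal_Y_log_lambda (κ : ℝ → ℝ)
    (hκ : ∀ y : ℝ, -1 < y → 0 < κ y ∧ (κ y - 1) * Real.exp (κ y) = y)
    (m u v : ℝ) (hm : 0 < m) (huv : u * v < 1) :
    ∀ r : ℝ, r = 2 * m * κ (-(u * v)) →
      0 < r ∧
      HasDerivAt (fun t : ℝ => Real.log ((2 * m * κ (-(t * v))) ^ 2))
        (-(8 * m ^ 2 * v / r ^ 2) * Real.exp (-(r / (2 * m)))) u ∧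
      u / (4 * m) * (-(8 * m ^ 2 * v / r ^ 2) * Real.exp (-(r / (2 * m)))) =
        (r - 2 * m) / r ^ 2 := by
  intro r hr
  have hy : (-1 : ℝ) < -(u * v) := by linarith
  obtain ⟨hx0pos, hx0eq⟩ := hκ (-(u * v)) hy
  set x0 := κ (-(u * v)) with hx0def
  have hrpos : 0 < r := by rw [hr]; positivity
  have hE : (0 : ℝ) < Real.exp x0 := Real.exp_pos x0
  have hrx0 : r / (2 * m) = x0 := by rw [hr]; field_simp
  have hexp : Real.exp (-(r / (2 * m))) = (Real.exp x0)⁻¹ := by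
    rw [hrx0, Real.exp_neg]
  -- derivative of κ at -(u*v)
  have hκderiv : HasDerivAt κ (x0 * Real.exp x0)⁻¹ (-(u * v)) := by
    apply HasDerivAt.of_local_left_inverse (kruskal_cont κ hκ _ hy)
      (kruskal_f_deriv x0) (by positivity)
    have hmem : Set.Ioi (-1 : ℝ) ∈ nhds (-(u * v)) := isOpen_Ioi.mem_nhds hy
    filter_upwards [hmem] with y hy'
    exact (hκ y hy').2
  -- inner function
  have hinner : HasDerivAt (fun t : ℝ => -(t * v)) (-v) u := by
    have := ((hasDerivAt_id u).mul_const v).neg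
    have e : (fun t : ℝ => -(t * v)) = -fun y => id y * v := by funext t; simp
    rw [e]
    exact this.congr_deriv (by ring)
  have hcomp : HasDerivAt (fun t : ℝ => κ (-(t * v)))
      ((x0 * Real.exp x0)⁻¹ * (-v)) u := hκderiv.comp u hinner
  have hh : HasDerivAt (fun t : ℝ => 2 * m * κ (-(t * v)))
      (2 * m * ((x0 * Real.exp x0)⁻¹ * (-v))) u := hcomp.const_mul (2 * m)
  have hhu : 2 * m * κ (-(u * v)) = r := hr.symm
  have hsq : HasDerivAt (fun t : ℝ => (2 * m * κ (-(t * v))) ^ 2)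
      (2 * (2 * m * κ (-(u * v))) ^ 1 * (2 * m * ((x0 * Real.exp x0)⁻¹ * (-v)))) u := by
    have e : (fun t : ℝ => (2 * m * κ (-(t * v))) ^ 2) = (fun t : ℝ => 2 * m * κ (-(t * v))) ^ 2 := by
      funext t; simp [Pi.pow_apply]
    rw [e]
    exact (hh.pow 2).congr_deriv (by norm_num)
  have hne : (2 * m * κ (-(u * v))) ^ 2 ≠ 0 := by
    rw [← hx0def]; positivity
  have hlog := hsq.log hne
  have heq : 2 * (2 * m * κ (-(u * v))) ^ 1 * (2 * m * ((x0 * Real.exp x0)⁻¹ * (-v))) /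
      (2 * m * κ (-(u * v))) ^ 2 =
      -(8 * m ^ 2 * v / r ^ 2) * Real.exp (-(r / (2 * m))) := by
    rw [hexp, ← hx0def, hr]
    have hm' : m ≠ 0 := ne_of_gt hm
    have hx0' : x0 ≠ 0 := ne_of_gt hx0pos
    have hE' : Real.exp x0 ≠ 0 := ne_of_gt hE
    field_simp
    ring
  rw [heq] at hlog
  refine ⟨hrpos, hlog, ?_⟩
  rw [hexp]
  have hm' : m ≠ 0 := ne_of_gt hm
  have hx0' : x0 ≠ 0 := ne_of_gt hx0pos
  have hE' : Real.exp x0 ≠ 0 := ne_of_gt hE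
  have hr' : r ≠ 0 := ne_of_gt hrpos
  rw [hr]
  field_simp
  linear_combination (-8) * hx0eq
end
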